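/- Let n = 2k+1 and φ(c, v, w) = cI + ε_v + ε*_v + i(ε_w − ε*_w) on Λℂ^k. If c² ≥ |v|² + |w|², then φ(c, v, w) is a positive semidefinite operator. -/

import Mathlib

/-- The complexified exterior algebra `Λℂ^k`, realized concretely as the
complex Euclidean space with orthonormal basis indexed by subsets of `Fin k`
(the basis element for `S` being the wedge of the standard basis vectors with
indices in `S`, in increasing order), with the inner product induced by
`⟨∧vᵢ, ∧wⱼ⟩ = det(⟨vᵢ, wⱼ⟩)`. -/
abbrev ExtAlgC (k : ℕ) := EuclideanSpace ℂ (Finset (Fin k))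

/-- Exterior multiplication `ε_v : u ↦ v ∧ u` by a real vector `v ∈ ℝ^k` on the
complexified exterior algebra `Λℂ^k`, in the orthonormal basis indexed by
subsets of `Fin k`. -/
noncomputable def extMulC {k : ℕ} (v : Fin k → ℝ) : ExtAlgC k →ₗ[ℂ] ExtAlgC k where
  toFun u := WithLp.toLp 2 (fun S => ∑ i ∈ S,
    (-1 : ℂ) ^ (S.filter (fun j => j < i)).card * (v i : ℂ) * u (S.erase i))
  map_add' u u' := by
    ext S
    simp only [PiLp.toLp_apply, PiLp.add_apply, mul_add, Finset.sum_add_distrib]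
  map_smul' c u := by
    ext S
    simp only [PiLp.toLp_apply, PiLp.smul_apply, smul_eq_mul, Finset.mul_sum, RingHom.id_apply]
    exact Finset.sum_congr rfl fun i _ => by ring

open scoped ComplexOrder

/-! ### Auxiliary sign combinatorics -/

variable {k : ℕ}

/-- The number of elements of `S` less than `i`. -/
def mS (S : Finset (Fin k)) (i : Fin k) : ℕ := (S.filter (fun j => j < i)).card

/-- The sign `(-1)^(mS S i)`. -/
noncomputable def sg (S : Finset (Fin k)) (i : Fin k) : ℂ := (-1) ^ (mS S i)

lemma sg_mul_self (S : Finset (Fin k)) (i : Fin k) : sg S i * sg S i = 1 := by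
  simp [sg, ← pow_add, ← two_mul, pow_mul]

lemma mS_erase_of_lt {S : Finset (Fin k)} {i j : Fin k} (h : i ∈ S) (hij : i < j) :
    mS (S.erase i) j + 1 = mS S j := by
  unfold mS
  rw [Finset.filter_erase]
  exact Finset.card_erase_add_one (Finset.mem_filter.2 ⟨h, hij⟩)

lemma mS_erase_of_not_lt {S : Finset (Fin k)} {i j : Fin k} (hij : ¬ i < j) :
    mS (S.erase i) j = mS S j := by
  unfold mS
  rw [Finset.filter_erase, Finset.erase_eq_of_notMem]
  simp [hij]

lemma mS_insert_of_lt {S : Finset (Fin k)} {i j : Fin k} (h : j ∉ S) (hij : j < i) :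
    mS (insert j S) i = mS S i + 1 := by
  unfold mS
  rw [Finset.filter_insert, if_pos hij, Finset.card_insert_of_notMem (by simp [h])]

lemma mS_insert_of_not_lt {S : Finset (Fin k)} {i j : Fin k} (hij : ¬ j < i) :
    mS (insert j S) i = mS S i := by
  unfold mS
  rw [Finset.filter_insert, if_neg hij]

lemma sg_erase_self {S : Finset (Fin k)} (i : Fin k) : sg (S.erase i) i = sg S i := by
  unfold sg; rw [mS_erase_of_not_lt (lt_irrefl i)]

lemma sg_insert_self {S : Finset (Fin k)} (i : Fin k) : sg (insert i S) i = sg S i := by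
  unfold sg; rw [mS_insert_of_not_lt (lt_irrefl i)]

/-- sign lemma for two distinct elements of `S` -/
lemma sg_swap {S : Finset (Fin k)} {i j : Fin k} (hi : i ∈ S) (hj : j ∈ S) (hij : i ≠ j) :
    sg S i * sg (S.erase i) j = -(sg S j * sg (S.erase j) i) := by
  rcases lt_or_gt_of_ne hij with hlt | hlt
  · unfold sg
    rw [← mS_erase_of_lt hi hlt, mS_erase_of_not_lt (asymm hlt), pow_succ]
    ring
  · unfold sg
    rw [← mS_erase_of_lt hj hlt, mS_erase_of_not_lt (asymm hlt), pow_succ]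
    ring

/-- sign lemma for `i ∈ S`, `j ∉ S` -/
lemma sg_swap' {S : Finset (Fin k)} {i j : Fin k} (hi : i ∈ S) (hj : j ∉ S) :
    sg S i * sg (S.erase i) j = -(sg S j * sg (insert j S) i) := by
  have hij : i ≠ j := fun h => hj (h ▸ hi)
  rcases lt_or_gt_of_ne hij with hlt | hlt
  · unfold sg
    rw [← mS_erase_of_lt hi hlt, mS_insert_of_not_lt (asymm hlt), pow_succ]
    ring
  · unfold sg
    rw [mS_erase_of_not_lt (asymm hlt), mS_insert_of_lt hj hlt, pow_succ]
    ring

/-! ### The adjoint of exterior multiplication -/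

/-- Interior multiplication: the adjoint of `extMulC v`. -/
noncomputable def extMulCAdj (v : Fin k → ℝ) : ExtAlgC k →ₗ[ℂ] ExtAlgC k where
  toFun u := WithLp.toLp 2 (fun S => ∑ i ∈ Sᶜ, sg S i * (v i : ℂ) * u (insert i S))
  map_add' u u' := by
    ext S
    simp only [PiLp.toLp_apply, PiLp.add_apply, mul_add, Finset.sum_add_distrib]
  map_smul' c u := by
    ext S
    simp only [PiLp.toLp_apply, PiLp.smul_apply, smul_eq_mul, Finset.mul_sum, RingHom.id_apply]
    exact Finset.sum_congr rfl fun i _ => by ring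

lemma extMulC_apply (v : Fin k → ℝ) (u : ExtAlgC k) (S : Finset (Fin k)) :
    extMulC v u S = ∑ i ∈ S, sg S i * (v i : ℂ) * u (S.erase i) := rfl

lemma extMulCAdj_apply (v : Fin k → ℝ) (u : ExtAlgC k) (S : Finset (Fin k)) :
    extMulCAdj v u S = ∑ i ∈ Sᶜ, sg S i * (v i : ℂ) * u (insert i S) := rfl

lemma conj_sg (S : Finset (Fin k)) (i : Fin k) :
    (starRingEnd ℂ) (sg S i) = sg S i := by
  unfold sg; simp

/-- reindexing pairs `(S, i ∈ S) ↔ (T, i ∉ T)` -/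
lemma sum_erase_reindex (f : Finset (Fin k) → Fin k → ℂ) :
    ∑ S : Finset (Fin k), ∑ i ∈ S, f S i
      = ∑ T : Finset (Fin k), ∑ i ∈ Tᶜ, f (insert i T) i := by
  rw [Finset.sum_sigma', Finset.sum_sigma']
  refine Finset.sum_nbij' (fun p => ⟨p.1.erase p.2, p.2⟩) (fun p => ⟨insert p.2 p.1, p.2⟩)
    ?_ ?_ ?_ ?_ ?_
  · rintro ⟨S, i⟩ hp
    simp only [Finset.mem_sigma, Finset.mem_univ, true_and] at hp ⊢
    simp [Finset.mem_compl]
  · rintro ⟨T, i⟩ hp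
    simp only [Finset.mem_sigma, Finset.mem_univ, true_and, Finset.mem_compl] at hp ⊢
    simp
  · rintro ⟨S, i⟩ hp
    simp only [Finset.mem_sigma, Finset.mem_univ, true_and] at hp
    simp [Finset.insert_erase hp]
  · rintro ⟨T, i⟩ hp
    simp only [Finset.mem_sigma, Finset.mem_univ, true_and, Finset.mem_compl] at hp
    simp [Finset.erase_insert hp]
  · rintro ⟨S, i⟩ hp
    simp only [Finset.mem_sigma, Finset.mem_univ, true_and] at hp
    simp [Finset.insert_erase hp]

lemma extMulC_adjoint (v : Fin k → ℝ) :
    LinearMap.adjoint (extMulC v) = extMulCAdj v := by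
  symm
  rw [LinearMap.eq_adjoint_iff]
  intro x y
  simp only [PiLp.inner_apply, RCLike.inner_apply', extMulC_apply, extMulCAdj_apply]
  have : ∀ S : Finset (Fin k),
      (starRingEnd ℂ) (x S) * ∑ i ∈ S, sg S i * (v i : ℂ) * y (S.erase i)
        = ∑ i ∈ S, sg S i * (v i : ℂ) * (starRingEnd ℂ) (x S) * y (S.erase i) := by
    intro S; rw [Finset.mul_sum]; exact Finset.sum_congr rfl fun i _ => by ring
  simp only [this]
  rw [sum_erase_reindex (fun S i => sg S i * (v i : ℂ) * (starRingEnd ℂ) (x S) * y (S.erase i))]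
  refine Finset.sum_congr rfl fun T _ => ?_
  rw [map_sum, Finset.sum_mul]
  refine Finset.sum_congr rfl fun i hi => ?_
  rw [Finset.mem_compl] at hi
  rw [sg_insert_self, Finset.erase_insert hi]
  simp only [map_mul, conj_sg, Complex.conj_ofReal]

/-! ### Anticommutation relations -/

lemma extMulC_comp_expand (a b : Fin k → ℝ) (u : ExtAlgC k) (S : Finset (Fin k)) :
    extMulC a (extMulC b u) S
      = ∑ p ∈ S.sigma (fun i => S.erase i),
          sg S p.1 * sg (S.erase p.1) p.2 * (a p.1 : ℂ) * (b p.2 : ℂ)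
            * u ((S.erase p.1).erase p.2) := by
  rw [extMulC_apply, Finset.sum_sigma]
  refine Finset.sum_congr rfl fun i hi => ?_
  rw [extMulC_apply, Finset.mul_sum]
  exact Finset.sum_congr rfl fun j hj => by ring

lemma extMulC_anticomm (v w : Fin k → ℝ) :
    extMulC (k := k) v ∘ₗ extMulC w + extMulC w ∘ₗ extMulC v = 0 := by
  refine LinearMap.ext fun u => ?_
  ext S
  simp only [LinearMap.add_apply, LinearMap.comp_apply, LinearMap.zero_apply,
    PiLp.add_apply, PiLp.zero_apply]
  rw [extMulC_comp_expand, extMulC_comp_expand, ← Finset.sum_add_distrib]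
  refine Finset.sum_involution (fun p _ => ⟨p.2, p.1⟩) ?_ ?_ ?_ ?_
  · rintro ⟨i, j⟩ hp
    simp only [Finset.mem_sigma, Finset.mem_erase] at hp
    obtain ⟨hi, hji, hj⟩ := hp
    have hswap := sg_swap hi hj (Ne.symm hji)
    have herase : (S.erase i).erase j = (S.erase j).erase i := Finset.erase_right_comm
    rw [herase]
    linear_combination (u ((S.erase j).erase i)
      * ((w j : ℂ) * (v i : ℂ) + (w i : ℂ) * (v j : ℂ))) * hswap
  · rintro ⟨i, j⟩ hp _
    simp only [Finset.mem_sigma, Finset.mem_erase] at hp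
    simp only [ne_eq, Sigma.mk.inj_iff]
    intro h
    exact hp.2.1 h.1
  · rintro ⟨i, j⟩ hp
    simp only [Finset.mem_sigma, Finset.mem_erase] at hp ⊢
    exact ⟨hp.2.2, fun h => hp.2.1 h.symm, hp.1⟩
  · rintro ⟨i, j⟩ _
    rfl

lemma extMulC_adj_anticomm (v w : Fin k → ℝ) :
    extMulC (k := k) v ∘ₗ extMulCAdj w + extMulCAdj w ∘ₗ extMulC v
      = (∑ i, (v i : ℂ) * (w i : ℂ)) • LinearMap.id := by
  refine LinearMap.ext fun u => ?_
  ext S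
  simp only [LinearMap.add_apply, LinearMap.comp_apply, LinearMap.smul_apply,
    LinearMap.id_apply, PiLp.add_apply, PiLp.smul_apply, smul_eq_mul]
  have h1 : extMulC v (extMulCAdj w u) S
      = (∑ i ∈ S, (v i : ℂ) * (w i : ℂ) * u S)
        + ∑ i ∈ S, ∑ j ∈ Sᶜ,
            sg S i * sg (S.erase i) j * (v i : ℂ) * (w j : ℂ) * u (insert j (S.erase i)) := by
    rw [extMulC_apply, ← Finset.sum_add_distrib]
    refine Finset.sum_congr rfl fun i hi => ?_
    rw [extMulCAdj_apply, Finset.compl_erase, Finset.sum_insert (by simp [hi]), mul_add,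
      Finset.mul_sum, Finset.insert_erase hi, sg_erase_self]
    have : sg S i * (v i : ℂ) * (sg S i * (w i : ℂ) * u S) = (v i : ℂ) * (w i : ℂ) * u S := by
      have := sg_mul_self S i; linear_combination ((v i : ℂ) * (w i : ℂ) * u S) * this
    rw [this]
    congr 1
    exact Finset.sum_congr rfl fun j hj => by ring
  have h2 : extMulCAdj w (extMulC v u) S
      = (∑ j ∈ Sᶜ, (v j : ℂ) * (w j : ℂ) * u S)
        + ∑ j ∈ Sᶜ, ∑ i ∈ S,
            sg S j * sg (insert j S) i * (v i : ℂ) * (w j : ℂ) * u ((insert j S).erase i) := by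
    rw [extMulCAdj_apply, ← Finset.sum_add_distrib]
    refine Finset.sum_congr rfl fun j hj => ?_
    rw [Finset.mem_compl] at hj
    rw [extMulC_apply, Finset.sum_insert hj, mul_add, Finset.mul_sum, Finset.erase_insert hj,
      sg_insert_self]
    have : sg S j * (w j : ℂ) * (sg S j * (v j : ℂ) * u S) = (v j : ℂ) * (w j : ℂ) * u S := by
      have := sg_mul_self S j; linear_combination ((v j : ℂ) * (w j : ℂ) * u S) * this
    rw [this]
    congr 1
    exact Finset.sum_congr rfl fun i hi => by ring
  rw [h1, h2]
  rw [Finset.sum_comm (s := Sᶜ) (t := S)]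
  have hcancel : ∑ i ∈ S, ∑ j ∈ Sᶜ,
        sg S i * sg (S.erase i) j * (v i : ℂ) * (w j : ℂ) * u (insert j (S.erase i))
      + ∑ i ∈ S, ∑ j ∈ Sᶜ,
        sg S j * sg (insert j S) i * (v i : ℂ) * (w j : ℂ) * u ((insert j S).erase i) = 0 := by
    rw [← Finset.sum_add_distrib]
    refine Finset.sum_eq_zero fun i hi => ?_
    rw [← Finset.sum_add_distrib]
    refine Finset.sum_eq_zero fun j hj => ?_
    rw [Finset.mem_compl] at hj
    have hij : j ≠ i := fun h => hj (h ▸ hi)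
    have hins : (insert j S).erase i = insert j (S.erase i) := Finset.erase_insert_of_ne hij
    rw [hins]
    have hswap := sg_swap' hi hj
    linear_combination ((v i : ℂ) * (w j : ℂ) * u (insert j (S.erase i))) * hswap
  have hdiag : (∑ i ∈ S, (v i : ℂ) * (w i : ℂ) * u S) + ∑ j ∈ Sᶜ, (v j : ℂ) * (w j : ℂ) * u S
      = (∑ i, (v i : ℂ) * (w i : ℂ)) * u S := by
    rw [Finset.sum_add_sum_compl, Finset.sum_mul]
  linear_combination hcancel + hdiag

/-! ### The square of the Clifford operator -/

lemma cliffordA_sq (v w : Fin k → ℝ) :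
    (extMulC v + extMulCAdj v + Complex.I • (extMulC w - extMulCAdj w)) ∘ₗ
        (extMulC v + extMulCAdj v + Complex.I • (extMulC w - extMulCAdj w))
      = ((∑ i, (v i : ℂ) ^ 2 + ∑ i, (w i : ℂ) ^ 2)) • LinearMap.id := by
  -- work in the endomorphism ring
  set a : Module.End ℂ (ExtAlgC k) := extMulC v with ha
  set b : Module.End ℂ (ExtAlgC k) := extMulCAdj v with hb
  set c : Module.End ℂ (ExtAlgC k) := extMulC w with hc
  set d : Module.End ℂ (ExtAlgC k) := extMulCAdj w with hd
  have haa : a * a = 0 := by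
    have h := extMulC_anticomm v v
    have h2 : (2 : ℂ) • (a * a) = 0 := by
      rw [two_smul]; exact h
    rcases smul_eq_zero.mp h2 with h' | h'
    · norm_num at h'
    · exact h'
  have hcc : c * c = 0 := by
    have h := extMulC_anticomm w w
    have h2 : (2 : ℂ) • (c * c) = 0 := by
      rw [two_smul]; exact h
    rcases smul_eq_zero.mp h2 with h' | h'
    · norm_num at h'
    · exact h'
  have hbb : b * b = 0 := by
    have := congrArg (LinearMap.adjoint) haa
    rwa [Module.End.mul_eq_comp, LinearMap.adjoint_comp, extMulC_adjoint, map_zero,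
      ← Module.End.mul_eq_comp] at this
  have hdd : d * d = 0 := by
    have := congrArg (LinearMap.adjoint) hcc
    rwa [Module.End.mul_eq_comp, LinearMap.adjoint_comp, extMulC_adjoint, map_zero,
      ← Module.End.mul_eq_comp] at this
  have hab : a * b + b * a = (∑ i, (v i : ℂ) ^ 2) • 1 := by
    have := extMulC_adj_anticomm v v
    rw [show (∑ i, (v i : ℂ) * (v i : ℂ)) = ∑ i, (v i : ℂ) ^ 2 from
      Finset.sum_congr rfl fun i _ => (sq (v i : ℂ)).symm] at this
    exact this
  have hcd : c * d + d * c = (∑ i, (w i : ℂ) ^ 2) • 1 := by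
    have := extMulC_adj_anticomm w w
    rw [show (∑ i, (w i : ℂ) * (w i : ℂ)) = ∑ i, (w i : ℂ) ^ 2 from
      Finset.sum_congr rfl fun i _ => (sq (w i : ℂ)).symm] at this
    exact this
  have hac : a * c + c * a = 0 := extMulC_anticomm v w
  have had : a * d + d * a = (∑ i, (v i : ℂ) * (w i : ℂ)) • 1 := extMulC_adj_anticomm v w
  have hcb : c * b + b * c = (∑ i, (w i : ℂ) * (v i : ℂ)) • 1 := extMulC_adj_anticomm w v
  have hbd : b * d + d * b = 0 := by
    have h := extMulC_anticomm w v
    have := congrArg (LinearMap.adjoint) h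
    rw [map_add, LinearMap.adjoint_comp, LinearMap.adjoint_comp, extMulC_adjoint,
      extMulC_adjoint, map_zero] at this
    exact this
  have hvw : (∑ i, (v i : ℂ) * (w i : ℂ)) = ∑ i, (w i : ℂ) * (v i : ℂ) :=
    Finset.sum_congr rfl fun i _ => mul_comm _ _
  -- now the algebra
  show (a + b + Complex.I • (c - d)) * (a + b + Complex.I • (c - d)) = _
  have hp : (a + b) * (a + b) = (∑ i, (v i : ℂ) ^ 2) • 1 := by
    have expand : (a + b) * (a + b) = a * a + (a * b + b * a) + b * b := by
      rw [add_mul, mul_add, mul_add]; abel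
    rw [expand, haa, hbb, hab]
    abel
  have hq0 : (c - d) * (c - d) = -((∑ i, (w i : ℂ) ^ 2) • 1) := by
    have hdc : d * c = (∑ i, (w i : ℂ) ^ 2) • 1 - c * d := by
      rw [← hcd]; abel
    have expand : (c - d) * (c - d) = c * c - (c * d) - (d * c) + d * d := by
      rw [sub_mul, mul_sub, mul_sub]; abel
    rw [expand, hcc, hdd, hdc]
    abel
  have hq : (Complex.I • (c - d)) * (Complex.I • (c - d)) = (∑ i, (w i : ℂ) ^ 2) • 1 := by
    rw [smul_mul_smul_comm, hq0, Complex.I_mul_I, neg_smul, one_smul, neg_neg]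
  have hcb' : b * c + c * b = (∑ i, (v i : ℂ) * (w i : ℂ)) • 1 := by
    rw [add_comm, hcb, hvw]
  have hcross0 : (a + b) * (c - d) + (c - d) * (a + b) = 0 := by
    have expand : (a + b) * (c - d) + (c - d) * (a + b)
        = ((a * c + c * a) + (b * c + c * b)) - ((a * d + d * a) + (b * d + d * b)) := by
      rw [add_mul, mul_sub, mul_sub, sub_mul, mul_add, mul_add]; abel
    rw [expand, hac, hcb', had, hbd]
    abel
  have hcross : (a + b) * (Complex.I • (c - d)) + (Complex.I • (c - d)) * (a + b) = 0 := by
    rw [mul_smul_comm, smul_mul_assoc, ← smul_add, hcross0, smul_zero]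
  have expand2 : (a + b + Complex.I • (c - d)) * (a + b + Complex.I • (c - d))
      = (a + b) * (a + b)
      + ((a + b) * (Complex.I • (c - d)) + (Complex.I • (c - d)) * (a + b))
      + (Complex.I • (c - d)) * (Complex.I • (c - d)) := by
    simp only [add_mul, mul_add]; abel
  rw [expand2, hp, hcross, hq, add_zero, ← add_smul]
  rfl

theorem cliffordPhi_posSemidef {k : ℕ} (c : ℝ) (v w : Fin k → ℝ)
    (h : ∑ i, v i ^ 2 + ∑ i, w i ^ 2 ≤ c ^ 2) (hc : 0 ≤ c) :
    let T := (c : ℂ) • LinearMap.id + extMulC v + (extMulC v).adjoint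
      + Complex.I • (extMulC w - (extMulC w).adjoint)
    ∀ u : ExtAlgC k, 0 ≤ (inner ℂ u (T u) : ℂ) := by
  intro T u
  set A : ExtAlgC k →ₗ[ℂ] ExtAlgC k :=
    extMulC v + extMulCAdj v + Complex.I • (extMulC w - extMulCAdj w) with hA
  set r : ℝ := ∑ i, v i ^ 2 + ∑ i, w i ^ 2 with hr
  have hTu : T u = (c : ℂ) • u + A u := by
    simp only [T, hA, extMulC_adjoint, LinearMap.add_apply, LinearMap.smul_apply,
      LinearMap.id_apply, LinearMap.sub_apply]
    abel
  -- A is self-adjoint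
  have hadj : LinearMap.adjoint A = A := by
    rw [hA]
    rw [map_add, map_add, extMulC_adjoint, LinearMap.adjoint.map_smulₛₗ, map_sub,
      extMulC_adjoint]
    have h1 : LinearMap.adjoint (extMulCAdj v) = extMulC v := by
      rw [← extMulC_adjoint, LinearMap.adjoint_adjoint]
    have h2 : LinearMap.adjoint (extMulCAdj w) = extMulC w := by
      rw [← extMulC_adjoint, LinearMap.adjoint_adjoint]
    rw [h1, h2, Complex.conj_I]
    module
  have hsym : ∀ x y : ExtAlgC k, (inner ℂ (A x) y : ℂ) = inner ℂ x (A y) := by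
    intro x y
    conv_rhs => rw [← hadj]
    rw [LinearMap.adjoint_inner_right]
  -- A squares to r
  have hA2 : A (A u) = (r : ℂ) • u := by
    have := cliffordA_sq v w
    have happ := congrArg (fun f => f u) this
    simp only [LinearMap.comp_apply, LinearMap.smul_apply, LinearMap.id_apply] at happ
    rw [← hA] at happ
    rw [happ, hr]
    push_cast
    rfl
  -- the inner product
  set t : ℂ := (inner ℂ u (A u) : ℂ) with ht
  have hinner : (inner ℂ u (T u) : ℂ) = ((c * ‖u‖ ^ 2 : ℝ) : ℂ) + t := by
    rw [hTu, inner_add_right, inner_smul_right, inner_self_eq_norm_sq_to_K, ← ht]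
    push_cast
    rfl
  have htreal : (starRingEnd ℂ) t = t := by
    calc (starRingEnd ℂ) t = inner ℂ (A u) u := by rw [ht, inner_conj_symm]
      _ = inner ℂ u (A u) := hsym u u
      _ = t := ht.symm
  have htim : t.im = 0 := by
    have h2 := congrArg Complex.im htreal
    simp only [Complex.conj_im] at h2
    linarith
  -- norm of A u
  have hAnorm : ‖A u‖ ^ 2 = r * ‖u‖ ^ 2 := by
    have h1 : (inner ℂ (A u) (A u) : ℂ) = (r : ℂ) * inner ℂ u u := by
      rw [hsym, hA2, inner_smul_right]
    rw [inner_self_eq_norm_sq_to_K, inner_self_eq_norm_sq_to_K] at h1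
    have h2 : ((‖A u‖ ^ 2 : ℝ) : ℂ) = ((r * ‖u‖ ^ 2 : ℝ) : ℂ) := by push_cast; exact h1
    exact_mod_cast h2
  have hru : r * ‖u‖ ^ 2 ≤ (c * ‖u‖) ^ 2 := by
    have := mul_le_mul_of_nonneg_right h (sq_nonneg ‖u‖)
    calc r * ‖u‖ ^ 2 ≤ c ^ 2 * ‖u‖ ^ 2 := this
      _ = (c * ‖u‖) ^ 2 := by ring
  have hAle : ‖A u‖ ≤ c * ‖u‖ := by
    nlinarith [norm_nonneg (A u), norm_nonneg u, mul_nonneg hc (norm_nonneg u), hAnorm, hru]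
  have habs : ‖t‖ ≤ ‖u‖ * ‖A u‖ := by
    rw [ht]
    exact norm_inner_le_norm u (A u)
  have htre : -(c * ‖u‖ ^ 2) ≤ t.re := by
    have h1 : |t.re| ≤ ‖t‖ := by
      exact Complex.abs_re_le_norm t
    have h2 : ‖u‖ * ‖A u‖ ≤ ‖u‖ * (c * ‖u‖) :=
      mul_le_mul_of_nonneg_left hAle (norm_nonneg u)
    have h3 : -|t.re| ≤ t.re := neg_abs_le t.re
    nlinarith
  rw [hinner, Complex.le_def]
  constructor
  · simp only [Complex.add_re, Complex.ofReal_re, Complex.zero_re]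
    linarith [htre]
  · simp only [Complex.add_im, Complex.ofReal_im, Complex.zero_im, htim]
    ring
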